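/- arXiv:1512.05983 — 2 statements merged into one kernel-verified Lean document; each statement's English description precedes it below -/
import Mathlib

section
/- The operator 𝒜 : L²([0,T),ℂ) → L²(ℝ₊,ℂ), defined by (𝒜f)(x) = e^{-λx} f(cut(x)) where cut(x) = x - T⌊x/T⌋ and λ > 0, is a bounded linear operator satisfying (e^{-2Tλ}/(1 - e^{-2Tλ}))·‖f‖₂² ≤ ‖𝒜f‖₂² ≤ (1/(1 - e^{-2Tλ}))·‖f‖₂² for every f ∈ L²([0,T),ℂ). -/
open MeasureTheory

/-- `cut T x = x mod T`. -/
noncomputable def cut (T x : ℝ) : ℝ := x - T * ⌊x / T⌋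

/-- The operator `𝒜`, `(𝒜 f)(x) = e^{-λ x} f(cut x)`. -/
noncomputable def Aop (T lm : ℝ) (f : ℝ → ℂ) : ℝ → ℂ :=
  fun x => Real.exp (-lm * x) • f (cut T x)

/-- `𝒜` is a bounded linear operator with the two-sided norm bound. -/
theorem stmt_0 (T lm : ℝ) (hT : 0 < T) (hl : 0 < lm)
    (f : ℝ → ℂ)
    (hf : IntegrableOn (fun x => ‖f x‖ ^ 2) (Set.Ico 0 T)) :
    -- linearity of 𝒜
    (∀ (c : ℂ) (g : ℝ → ℂ),
      Aop T lm (fun x => c • f x + g x) = fun x => c • Aop T lm f x + Aop T lm g x) ∧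
    -- lower bound
    (Real.exp (-2 * T * lm) / (1 - Real.exp (-2 * T * lm))) *
        (∫ x in Set.Ico 0 T, ‖f x‖ ^ 2)
      ≤ (∫ x in Set.Ici (0:ℝ), ‖Aop T lm f x‖ ^ 2) ∧
    -- upper bound (in particular 𝒜 is bounded)
    (∫ x in Set.Ici (0:ℝ), ‖Aop T lm f x‖ ^ 2)
      ≤ (1 / (1 - Real.exp (-2 * T * lm))) * (∫ x in Set.Ico 0 T, ‖f x‖ ^ 2) := by
  -- notation
  set r : ℝ := Real.exp (-2 * T * lm) with hrdef
  have hr0 : 0 < r := Real.exp_pos _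
  have hr1 : r < 1 := by
    rw [hrdef, Real.exp_lt_one_iff]; nlinarith
  have h1r : 0 < 1 - r := by linarith
  set g : ℝ → ℝ := fun y => ‖f y‖ ^ 2 with hgdef
  set ψ : ℝ → ℝ := fun y => Real.exp (-2 * lm * y) * g y with hψdef
  set φ : ℝ → ℝ := fun x => Real.exp (-2 * lm * x) * g (cut T x) with hφdef
  set I : ℝ := ∫ x in Set.Ico 0 T, g x with hIdef
  set J : ℝ := ∫ x in Set.Ico 0 T, ψ x with hJdef
  have hgnn : ∀ x, 0 ≤ g x := fun x => by positivity
  have hnorm : ∀ x, ‖Aop T lm f x‖ ^ 2 = φ x := by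
    intro x
    rw [Aop, norm_smul, mul_pow, Real.norm_eq_abs,
      abs_of_pos (Real.exp_pos _), pow_two, ← Real.exp_add]
    congr 2
    ring
  -- integrability of ψ on [0,T)
  have hg_int : IntegrableOn g (Set.Ico 0 T) := hf
  have hg_meas : AEStronglyMeasurable g (volume.restrict (Set.Ico 0 T)) :=
    hg_int.aestronglyMeasurable
  have hψ_meas : AEStronglyMeasurable ψ (volume.restrict (Set.Ico 0 T)) :=
    ((Real.continuous_exp.comp (continuous_const.mul continuous_id)).aestronglyMeasurable).mul
      hg_meas
  have hψ_int : IntegrableOn ψ (Set.Ico 0 T) := by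
    apply Integrable.mono' hg_int hψ_meas
    filter_upwards [ae_restrict_mem measurableSet_Ico] with x hx
    have h1 : Real.exp (-2 * lm * x) ≤ 1 := by
      rw [Real.exp_le_one_iff]; nlinarith [hx.1]
    have h2 : 0 < Real.exp (-2 * lm * x) := Real.exp_pos _
    rw [Real.norm_eq_abs, abs_of_nonneg (by positivity)]
    show Real.exp (-2 * lm * x) * g x ≤ g x
    nlinarith [hgnn x]
  have hI0 : 0 ≤ I := setIntegral_nonneg measurableSet_Ico fun x _ => hgnn x
  have hJ0 : 0 ≤ J :=
    setIntegral_nonneg measurableSet_Ico fun x _ => by positivity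
  have hJle : J ≤ I := by
    apply setIntegral_mono_on hψ_int hg_int measurableSet_Ico
    intro x hx
    have h1 : Real.exp (-2 * lm * x) ≤ 1 := by
      rw [Real.exp_le_one_iff]; nlinarith [hx.1]
    have h2 : 0 < Real.exp (-2 * lm * x) := Real.exp_pos _
    show Real.exp (-2 * lm * x) * g x ≤ g x
    nlinarith [hgnn x]
  have hrI : r * I ≤ J := by
    rw [hIdef, ← integral_const_mul]
    apply setIntegral_mono_on (hg_int.const_mul r) hψ_int measurableSet_Ico
    intro x hx
    have h1 : r ≤ Real.exp (-2 * lm * x) := by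
      rw [hrdef]; apply Real.exp_le_exp.mpr; nlinarith [hx.2]
    exact mul_le_mul_of_nonneg_right h1 (hgnn x)
  -- the pieces
  set s : ℕ → Set ℝ := fun n => Set.Ico ((n : ℝ) * T) (((n : ℝ) + 1) * T) with hsdef
  have hs_meas : ∀ n, MeasurableSet (s n) := fun n => measurableSet_Ico
  have hs_disj : Pairwise (Function.onFun Disjoint s) := by
    have key : ∀ m n : ℕ, m < n → Disjoint (s m) (s n) := by
      intro m n h
      rw [hsdef]
      rw [Set.Ico_disjoint_Ico]
      have hmn : ((m : ℝ) + 1) ≤ (n : ℝ) := by exact_mod_cast h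
      calc min (((m : ℝ) + 1) * T) (((n : ℝ) + 1) * T) ≤ ((m : ℝ) + 1) * T :=
            min_le_left _ _
        _ ≤ (n : ℝ) * T := by nlinarith
        _ ≤ max ((m : ℝ) * T) ((n : ℝ) * T) := le_max_right _ _
    intro m n hmn
    rcases lt_or_gt_of_ne hmn with h | h
    · exact key m n h
    · exact (key n m h).symm
  have hUnion : (⋃ n, s n) = Set.Ici (0 : ℝ) := by
    ext x
    simp only [hsdef, Set.mem_iUnion, Set.mem_Ico, Set.mem_Ici]
    constructor
    · rintro ⟨n, h1, h2⟩
      have : (0 : ℝ) ≤ (n : ℝ) * T := by positivity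
      linarith
    · intro hx
      refine ⟨⌊x / T⌋₊, ?_, ?_⟩
      · have h1 : (⌊x / T⌋₊ : ℝ) ≤ x / T := Nat.floor_le (by positivity)
        calc (⌊x / T⌋₊ : ℝ) * T ≤ (x / T) * T := by nlinarith
          _ = x := by field_simp
      · have h2 : x / T < ⌊x / T⌋₊ + 1 := Nat.lt_floor_add_one _
        calc x = (x / T) * T := by field_simp
          _ < ((⌊x / T⌋₊ : ℝ) + 1) * T := by nlinarith
  have hcut : ∀ n : ℕ, ∀ x ∈ s n, cut T x = x - (n : ℝ) * T := by
    intro n x hx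
    have hfl : ⌊x / T⌋ = (n : ℤ) := by
      rw [Int.floor_eq_iff]
      constructor
      · push_cast
        rw [le_div_iff₀ hT]
        exact hx.1
      · push_cast
        rw [div_lt_iff₀ hT]
        exact hx.2
    rw [cut, hfl]
    push_cast
    ring
  -- measure preserving translations
  have hMP : ∀ n : ℕ, MeasurePreserving (fun x => x - (n : ℝ) * T)
      (volume.restrict (s n)) (volume.restrict (Set.Ico 0 T)) := by
    intro n
    have h := (measurePreserving_sub_right volume ((n : ℝ) * T)).restrict_preimage
      (measurableSet_Ico : MeasurableSet (Set.Ico (0:ℝ) T))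
    have hpre : (fun x => x - (n : ℝ) * T) ⁻¹' Set.Ico (0:ℝ) T = s n := by
      rw [Set.preimage_sub_const_Ico, hsdef]
      congr 1 <;> ring
    rwa [hpre] at h
  have hemb : ∀ n : ℕ, MeasurableEmbedding (fun x : ℝ => x - (n : ℝ) * T) := fun n =>
    (Homeomorph.subRight ((n : ℝ) * T)).measurableEmbedding
  -- pointwise identification on each piece
  have hpw : ∀ n : ℕ, ∀ x ∈ s n, φ x = r ^ n * ψ (x - (n : ℝ) * T) := by
    intro n x hx
    simp only [hφdef, hψdef]
    rw [hcut n x hx, hrdef, ← Real.exp_nat_mul, ← mul_assoc, ← Real.exp_add]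
    congr 2
    push_cast
    ring
  have hterm_int : ∀ n : ℕ, IntegrableOn φ (s n) := by
    intro n
    have h1 : Integrable ((fun y => r ^ n * ψ y) ∘ fun x => x - (n : ℝ) * T)
        (volume.restrict (s n)) :=
      ((hMP n).integrable_comp_emb (hemb n)).mpr (hψ_int.const_mul _)
    apply h1.congr
    filter_upwards [ae_restrict_mem (hs_meas n)] with x hx
    exact (hpw n x hx).symm
  have hterm_val : ∀ n : ℕ, ∫ x in s n, φ x = r ^ n * J := by
    intro n
    rw [setIntegral_congr_fun (hs_meas n) (hpw n)]
    rw [(hMP n).integral_comp (hemb n) (fun y => r ^ n * ψ y)]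
    rw [integral_const_mul]
  -- integrability on the union
  have hφ_nonneg : ∀ x, 0 ≤ φ x := fun x => by positivity
  have hsum_geom : Summable (fun n : ℕ => r ^ n * J) :=
    (summable_geometric_of_lt_one hr0.le hr1).mul_right J
  have hφ_int : IntegrableOn φ (Set.Ici (0 : ℝ)) := by
    rw [← hUnion]
    constructor
    · rw [aestronglyMeasurable_iUnion_iff]
      intro n
      exact (hterm_int n).aestronglyMeasurable
    · rw [hasFiniteIntegral_iff_ofReal (ae_of_all _ hφ_nonneg)]
      rw [lintegral_iUnion hs_meas hs_disj]
      have heach : ∀ n, ∫⁻ x in s n, ENNReal.ofReal (φ x) = ENNReal.ofReal (r ^ n * J) := by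
        intro n
        rw [← ofReal_integral_eq_lintegral_ofReal (hterm_int n) (ae_of_all _ hφ_nonneg),
          hterm_val n]
      rw [tsum_congr heach,
        ← ENNReal.ofReal_tsum_of_nonneg (fun n => by positivity) hsum_geom]
      exact ENNReal.ofReal_lt_top
  -- summing up
  have hHS : HasSum (fun n : ℕ => r ^ n * J) (∫ x in Set.Ici (0 : ℝ), φ x) := by
    have h := hasSum_integral_iUnion hs_meas hs_disj (hUnion ▸ hφ_int)
    rw [hUnion] at h
    have e : (fun n => ∫ x in s n, φ x) = fun n : ℕ => r ^ n * J := funext hterm_val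
    rw [e] at h
    exact h
  have hgeo : HasSum (fun n : ℕ => r ^ n * J) ((1 - r)⁻¹ * J) :=
    (hasSum_geometric_of_lt_one hr0.le hr1).mul_right J
  have hval : ∫ x in Set.Ici (0 : ℝ), φ x = (1 - r)⁻¹ * J := hHS.unique hgeo
  refine ⟨?_, ?_, ?_⟩
  · intro c g
    funext x
    simp only [Aop, smul_add]
    rw [smul_comm]
  · simp only [hnorm]
    rw [hval]
    rw [div_eq_mul_inv, mul_comm (r * (1 - r)⁻¹)]
    have : r * (1 - r)⁻¹ * I = (1 - r)⁻¹ * (r * I) := by ring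
    calc I * (r * (1 - r)⁻¹) = (1 - r)⁻¹ * (r * I) := by ring
      _ ≤ (1 - r)⁻¹ * J := by
          apply mul_le_mul_of_nonneg_left hrI (inv_nonneg.mpr h1r.le)
  · simp only [hnorm]
    rw [hval]
    calc (1 - r)⁻¹ * J ≤ (1 - r)⁻¹ * I :=
          mul_le_mul_of_nonneg_left hJle (inv_nonneg.mpr h1r.le)
      _ = 1 / (1 - r) * I := by ring
end

section
/- For all f, g ∈ L²([0,T),ℂ), the function h(x) := (1 - e^{-2λT})·e^{2λ·cut(x)}·(𝒜f)(x) on ℝ₊ satisfies ⟨h, 𝒜g⟩_{L²(ℝ₊)} = ⟨f, g⟩_{L²([0,T))}. Consequently, the adjoint of the inverse of 𝒜 (viewed as a bijection onto its range) is (𝒜⁻¹)*f (x)= (1 - e^{-2λT})·e^{2λ·cut(x)}·(𝒜f)(x). -/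
open MeasureTheory Complex Set ComplexConjugate
open scoped ENNReal NNReal

/-- The candidate for `(𝒜⁻¹)* f`, namely `x ↦ (1 - e^{-2λT}) e^{2λ cut(x)} (𝒜f)(x)`. -/
noncomputable def AinvStar (T lm : ℝ) (f : ℝ → ℂ) : ℝ → ℂ :=
  fun x => ((1 - Real.exp (-2 * lm * T)) * Real.exp (2 * lm * cut T x)) • Aop T lm f x

section aux
variable {T lm : ℝ}

lemma cut_mem_Ico (hT : 0 < T) (x : ℝ) : cut T x ∈ Ico 0 T := by
  constructor
  · have := Int.sub_floor_div_mul_nonneg x hT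
    simp only [cut]; linarith [this]
  · have := Int.sub_floor_div_mul_lt x hT
    simp only [cut]; linarith [this]

lemma measurable_cut : Measurable (cut T) := by
  unfold cut
  exact measurable_id.sub (measurable_const.mul
    ((measurable_from_top (f := (Int.cast : ℤ → ℝ))).comp
      (Int.measurable_floor.comp (measurable_id.div_const T))))

lemma floor_eq_of_mem (hT : 0 < T) {n : ℕ} {x : ℝ}
    (hx : x ∈ Ico ((n : ℝ) * T) (((n : ℝ) + 1) * T)) : ⌊x / T⌋ = n := by
  obtain ⟨h1, h2⟩ := hx
  rw [Int.floor_eq_iff]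
  constructor
  · push_cast
    rw [le_div_iff₀ hT]; linarith
  · push_cast
    rw [div_lt_iff₀ hT]; linarith

lemma cut_add_nat (hT : 0 < T) (n : ℕ) {y : ℝ} (hy : y ∈ Ico (0:ℝ) T) :
    cut T (y + n * T) = y := by
  have hmem : y + (n : ℝ) * T ∈ Ico ((n : ℝ) * T) (((n : ℝ) + 1) * T) := by
    obtain ⟨h1, h2⟩ := hy
    constructor <;> [linarith; nlinarith]
  have := floor_eq_of_mem hT hmem
  simp only [cut, this]
  push_cast
  ring

lemma floor_add_nat' (hT : 0 < T) (n : ℕ) {y : ℝ} (hy : y ∈ Ico (0:ℝ) T) :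
    ⌊(y + n * T) / T⌋ = n := by
  apply floor_eq_of_mem hT
  obtain ⟨h1, h2⟩ := hy
  constructor <;> [linarith; nlinarith]

lemma iUnion_Ico_eq (hT : 0 < T) :
    (⋃ n : ℕ, Ico ((n : ℝ) * T) (((n : ℝ) + 1) * T)) = Ici (0:ℝ) := by
  ext x
  simp only [mem_iUnion, mem_Ico, mem_Ici]
  constructor
  · rintro ⟨n, h1, _⟩
    have : (0:ℝ) ≤ (n : ℝ) * T := by positivity
    linarith
  · intro hx
    refine ⟨⌊x / T⌋.toNat, ?_, ?_⟩
    · have h1 : ((⌊x / T⌋.toNat : ℤ) : ℝ) ≤ x / T := by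
        rw [Int.toNat_of_nonneg (Int.floor_nonneg.2 (by positivity))]
        exact Int.floor_le _
      calc ((⌊x / T⌋.toNat : ℕ) : ℝ) * T ≤ (x / T) * T := by
            apply mul_le_mul_of_nonneg_right _ hT.le
            exact_mod_cast h1
        _ = x := by field_simp
    · have h2 : x / T < (⌊x / T⌋.toNat : ℝ) + 1 := by
        rw [show ((⌊x / T⌋.toNat : ℕ) : ℝ) = ((⌊x / T⌋.toNat : ℤ) : ℝ) by push_cast; ring,
          Int.toNat_of_nonneg (Int.floor_nonneg.2 (by positivity))]
        push_cast
        exact Int.lt_floor_add_one _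
      calc x = (x / T) * T := by field_simp
        _ < ((⌊x / T⌋.toNat : ℝ) + 1) * T := by
            exact mul_lt_mul_of_pos_right h2 hT

/-- a.e.-equality transfer along `cut`. -/
lemma comp_cut_ae (hT : 0 < T) {φ ψ : ℝ → ℂ}
    (h : φ =ᵐ[volume.restrict (Ico 0 T)] ψ) :
    (fun x => φ (cut T x)) =ᵐ[volume.restrict (Ici 0)] fun x => ψ (cut T x) := by
  have hN : volume ({x | φ x ≠ ψ x} ∩ Ico 0 T) = 0 := by
    have := h
    rw [Filter.EventuallyEq, ae_iff] at this
    rwa [Measure.restrict_apply' measurableSet_Ico] at this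
  set M : Set ℝ := {x | φ x ≠ ψ x} ∩ Ico 0 T with hM
  rw [Filter.EventuallyEq, ae_iff, Measure.restrict_apply' measurableSet_Ici]
  have hsub : {x | ¬ φ (cut T x) = ψ (cut T x)} ∩ Ici 0 ⊆
      ⋃ n : ℕ, (fun y => y - (n : ℝ) * T) ⁻¹' M := by
    intro x ⟨hx1, hx2⟩
    have hxU : x ∈ ⋃ n : ℕ, Ico ((n : ℝ) * T) (((n : ℝ) + 1) * T) := by
      rw [iUnion_Ico_eq hT]; exact hx2
    simp only [mem_iUnion] at hxU ⊢
    obtain ⟨n, hn⟩ := hxU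
    refine ⟨n, ?_⟩
    have hfl := floor_eq_of_mem hT hn
    have hcut : cut T x = x - (n : ℝ) * T := by simp [cut, hfl]; ring
    have hmem : cut T x ∈ Ico (0:ℝ) T := cut_mem_Ico hT x
    simp only [mem_preimage, hM, mem_inter_iff, mem_setOf_eq]
    rw [← hcut]
    exact ⟨hx1, hmem⟩
  refine measure_mono_null hsub (le_antisymm ?_ zero_le)
  calc volume (⋃ n : ℕ, (fun y => y - (n : ℝ) * T) ⁻¹' M)
      ≤ ∑' n : ℕ, volume ((fun y => y - (n : ℝ) * T) ⁻¹' M) := measure_iUnion_le _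
    _ = 0 := by
        rw [ENNReal.tsum_eq_zero]
        intro n
        exact (measurePreserving_sub_right volume ((n : ℝ) * T)).quasiMeasurePreserving.preimage_null hN

end aux

/-- for all `f, g ∈ L²([0,T),ℂ)`, the function
`h(x) = (1 - e^{-2λT}) e^{2λ cut(x)} (𝒜f)(x)` satisfies
`⟨h, 𝒜g⟩_{L²(ℝ₊)} = ⟨f, g⟩_{L²([0,T))}`; consequently `h` represents `(𝒜⁻¹)* f`,
i.e. the adjoint of the inverse of `𝒜 : L²([0,T)) → ran 𝒜` applied to `f`. -/
theorem stmt_2 (T lm : ℝ) (hT : 0 < T) (hl : 0 < lm)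
    (f g : ℝ → ℂ)
    (hf : MemLp f 2 (volume.restrict (Set.Ico 0 T)))
    (hg : MemLp g 2 (volume.restrict (Set.Ico 0 T))) :
    (∫ x in Set.Ici (0:ℝ), AinvStar T lm f x * (starRingEnd ℂ) (Aop T lm g x))
      = ∫ x in Set.Ico 0 T, f x * (starRingEnd ℂ) (g x) := by
  classical
  set μT := volume.restrict (Set.Ico (0:ℝ) T) with hμT
  obtain ⟨f', hf's, hff'⟩ : ∃ f', StronglyMeasurable f' ∧ f =ᵐ[μT] f' :=
    ⟨hf.1.mk f, hf.1.stronglyMeasurable_mk, hf.1.ae_eq_mk⟩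
  obtain ⟨g', hg's, hgg'⟩ : ∃ g', StronglyMeasurable g' ∧ g =ᵐ[μT] g' :=
    ⟨hg.1.mk g, hg.1.stronglyMeasurable_mk, hg.1.ae_eq_mk⟩
  have hf' : MemLp f' 2 μT := hf.ae_eq hff'
  have hg' : MemLp g' 2 μT := hg.ae_eq hgg'
  -- replace by measurable representatives
  have hL : (∫ x in Set.Ici (0:ℝ), AinvStar T lm f x * (starRingEnd ℂ) (Aop T lm g x))
      = ∫ x in Set.Ici (0:ℝ), AinvStar T lm f' x * (starRingEnd ℂ) (Aop T lm g' x) := by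
    apply integral_congr_ae
    filter_upwards [comp_cut_ae hT hff', comp_cut_ae hT hgg'] with x h1 h2
    simp only [AinvStar, Aop, h1, h2]
  have hR : (∫ x in Set.Ico (0:ℝ) T, f x * (starRingEnd ℂ) (g x))
      = ∫ x in Set.Ico (0:ℝ) T, f' x * (starRingEnd ℂ) (g' x) := by
    apply integral_congr_ae
    filter_upwards [hff', hgg'] with x h1 h2
    rw [h1, h2]
  rw [hL, hR]
  clear hL hR hff' hgg' hf hg f g
  -- set up constants
  set c : ℝ := Real.exp (-2 * lm * T) with hc
  have hc0 : 0 < c := Real.exp_pos _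
  have hc1 : c < 1 := by
    rw [hc, Real.exp_lt_one_iff]; nlinarith
  -- the integrand on `Ici 0`
  set K : ℝ → ℂ := fun x =>
    ((1 - c) * c ^ (⌊x / T⌋.toNat) : ℝ) • (f' (cut T x) * (starRingEnd ℂ) (g' (cut T x))) with hK
  have key : ∀ x ∈ Set.Ici (0:ℝ),
      AinvStar T lm f' x * (starRingEnd ℂ) (Aop T lm g' x) = K x := by
    intro x hx
    have hfl : ((⌊x / T⌋ : ℤ) : ℝ) = (⌊x / T⌋.toNat : ℝ) := by
      exact_mod_cast congrArg (Int.cast : ℤ → ℝ)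
        (Int.toNat_of_nonneg (Int.floor_nonneg.2 (div_nonneg hx hT.le))).symm
    have hexp : Real.exp (2 * lm * cut T x) * Real.exp (-lm * x) * Real.exp (-lm * x)
        = c ^ (⌊x / T⌋.toNat) := by
      rw [← Real.exp_add, ← Real.exp_add, hc, ← Real.exp_nat_mul]
      congr 1
      simp only [cut]
      rw [hfl]
      ring
    have hstep : AinvStar T lm f' x * (starRingEnd ℂ) (Aop T lm g' x)
        = (((1 - c) * Real.exp (2 * lm * cut T x) * Real.exp (-lm * x) * Real.exp (-lm * x)) : ℝ)
          • (f' (cut T x) * (starRingEnd ℂ) (g' (cut T x))) := by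
      simp only [AinvStar, Aop, real_smul, ofReal_mul, map_mul, conj_ofReal]
      ring
    rw [hstep, hK]
    congr 1
    rw [← hexp]
    ring
  -- integrability of the pointwise product on [0,T)
  have hgc : MemLp (fun x => (starRingEnd ℂ) (g' x)) 2 μT := by
    refine hg'.of_le (continuous_star.comp_stronglyMeasurable hg's).aestronglyMeasurable ?_
    filter_upwards with x
    simp
  have hI : Integrable (fun x => f' x * (starRingEnd ℂ) (g' x)) μT := by
    rw [← memLp_one_iff_integrable]
    have h12 : (1 : ℝ≥0∞) / 1 = 1 / 2 + 1 / 2 := by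
      rw [one_div, one_div, ENNReal.inv_two_add_inv_two, inv_one]
    exact hgc.smul (φ := f') (r := 1) hf'
  -- the pieces
  set S : ℕ → Set ℝ := fun n => Set.Ico ((n : ℝ) * T) (((n : ℝ) + 1) * T) with hS
  have hSm : ∀ n, MeasurableSet (S n) := fun n => measurableSet_Ico
  have hSd : Pairwise (Function.onFun Disjoint S) := by
    intro m n hmn
    simp only [Function.onFun, hS, Set.Ico_disjoint_Ico]
    rcases hmn.lt_or_gt with h | h
    · have : (m : ℝ) + 1 ≤ (n : ℝ) := by exact_mod_cast h
      refine le_trans (min_le_left _ _) (le_trans ?_ (le_max_right _ _))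
      nlinarith
    · have : (n : ℝ) + 1 ≤ (m : ℝ) := by exact_mod_cast h
      refine le_trans (min_le_right _ _) (le_trans ?_ (le_max_left _ _))
      nlinarith
  have hSU : (⋃ n, S n) = Set.Ici (0:ℝ) := iUnion_Ico_eq hT
  have hpre : ∀ n : ℕ, (fun y => y + (n : ℝ) * T) ⁻¹' S n = Set.Ico (0:ℝ) T := by
    intro n
    ext y
    simp only [Set.mem_preimage, hS, Set.mem_Ico]
    constructor <;> rintro ⟨h1, h2⟩ <;> constructor <;> nlinarith
  have hKshift : ∀ n : ℕ, ∀ y ∈ Set.Ico (0:ℝ) T,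
      K (y + (n : ℝ) * T) = ((1 - c) * c ^ n : ℝ) • (f' y * (starRingEnd ℂ) (g' y)) := by
    intro n y hy
    simp only [hK]
    rw [cut_add_nat hT n hy, floor_add_nat' hT n hy, Int.toNat_natCast]
  have hmp : ∀ n : ℕ, MeasurePreserving (fun y : ℝ => y + (n : ℝ) * T) volume volume :=
    fun n => measurePreserving_add_right volume _
  have hemb : ∀ n : ℕ, MeasurableEmbedding (fun y : ℝ => y + (n : ℝ) * T) :=
    fun n => measurableEmbedding_addRight _
  -- integrability of K on Ici 0
  have hKmeas : Measurable K := by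
    apply Measurable.smul (f := fun x => ((1 - c) * c ^ (⌊x / T⌋.toNat) : ℝ))
      (g := fun x => f' (cut T x) * (starRingEnd ℂ) (g' (cut T x)))
    · exact measurable_const.mul
        ((measurable_from_top (f := fun n : ℕ => c ^ n)).comp
          ((measurable_from_top (f := Int.toNat)).comp
            (Int.measurable_floor.comp (measurable_id.div_const T))))
    · exact (hf's.measurable.comp measurable_cut).mul
        (continuous_star.measurable.comp (hg's.measurable.comp measurable_cut))
  have hJfin : ∫⁻ y in Set.Ico (0:ℝ) T, ‖f' y * (starRingEnd ℂ) (g' y)‖₊ ∂volume < ⊤ := hI.2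
  have hKint : IntegrableOn K (Set.Ici (0:ℝ)) volume := by
    refine ⟨hKmeas.aestronglyMeasurable, ?_⟩
    have hpiece : ∀ n : ℕ, ∫⁻ x in S n, ‖K x‖₊ ∂volume
        = ENNReal.ofReal ((1 - c) * c ^ n) *
          ∫⁻ y in Set.Ico (0:ℝ) T, ‖f' y * (starRingEnd ℂ) (g' y)‖₊ ∂volume := by
      intro n
      rw [← (hmp n).setLIntegral_comp_preimage_emb (hemb n), hpre n]
      rw [setLIntegral_congr_fun measurableSet_Ico
        (fun y hy => ?_), lintegral_const_mul' _ _ ENNReal.ofReal_ne_top]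
      have hnn : (0:ℝ) ≤ (1 - c) * c ^ n :=
        mul_nonneg (by linarith) (pow_nonneg hc0.le n)
      rw [hKshift n y hy, nnnorm_smul, ENNReal.coe_mul,
        Real.nnnorm_of_nonneg hnn, ENNReal.ofReal_eq_coe_nnreal hnn]
    unfold HasFiniteIntegral
    calc ∫⁻ x, ‖K x‖₊ ∂(volume.restrict (Set.Ici (0:ℝ)))
        = ∫⁻ x in ⋃ n, S n, ‖K x‖₊ ∂volume := by rw [hSU]
      _ = ∑' n, ∫⁻ x in S n, ‖K x‖₊ ∂volume := lintegral_iUnion hSm hSd _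
      _ = (∑' n, ENNReal.ofReal ((1 - c) * c ^ n)) *
            ∫⁻ y in Set.Ico (0:ℝ) T, ‖f' y * (starRingEnd ℂ) (g' y)‖₊ ∂volume := by
          simp_rw [hpiece]
          rw [ENNReal.tsum_mul_right]
      _ < ⊤ := by
          apply ENNReal.mul_lt_top _ hJfin
          rw [← ENNReal.ofReal_tsum_of_nonneg
            (fun n => mul_nonneg (by linarith) (pow_nonneg hc0.le n))
            ((summable_geometric_of_lt_one hc0.le hc1).mul_left _)]
          exact ENNReal.ofReal_lt_top
  -- main computation
  have hsummable : Summable (fun n : ℕ => (1 - c) * c ^ n) :=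
    (summable_geometric_of_lt_one hc0.le hc1).mul_left _
  calc (∫ x in Set.Ici (0:ℝ), AinvStar T lm f' x * (starRingEnd ℂ) (Aop T lm g' x))
      = ∫ x in Set.Ici (0:ℝ), K x := setIntegral_congr_fun measurableSet_Ici key
    _ = ∫ x in ⋃ n, S n, K x := by rw [hSU]
    _ = ∑' n, ∫ x in S n, K x := integral_iUnion hSm hSd (hSU ▸ hKint)
    _ = ∑' n : ℕ, ((1 - c) * c ^ n : ℝ) • ∫ y in Set.Ico (0:ℝ) T,
          f' y * (starRingEnd ℂ) (g' y) := by
        congr 1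
        funext n
        rw [← (hmp n).setIntegral_preimage_emb (hemb n) K (S n), hpre n]
        rw [setIntegral_congr_fun measurableSet_Ico (fun y hy => hKshift n y hy)]
        rw [integral_smul]
    _ = ((∑' n : ℕ, (1 - c) * c ^ n) : ℝ) • ∫ y in Set.Ico (0:ℝ) T,
          f' y * (starRingEnd ℂ) (g' y) := hsummable.tsum_smul_const _
    _ = ∫ y in Set.Ico (0:ℝ) T, f' y * (starRingEnd ℂ) (g' y) := by
        rw [tsum_mul_left, tsum_geometric_of_lt_one hc0.le hc1,
          mul_inv_cancel₀ (by linarith), one_smul]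
end
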